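/- Under the misspecified shared-basis model and on the event E_C (λ̲_m I ⪯ Σ_m ⪯ λ̄_m I for all m), for any fixed matrix Ū ∈ ℝ^{d²×2k} with orthonormal columns, the low-rank part of the total squared prediction error of the minimizers (Ŵ, B̂) satisfies: (1/2)·Σ_m ‖X̃_m(W*β*_m − Ŵβ̂_m)‖₂² ≤ sqrt(Σ_m ‖η̃_m'X̃_mŪ‖²_{V̄_m^{-1}}) · sqrt(2 Σ_m ‖X̃_m(W*β*_m − Ŵβ̂_m)‖₂²) + Σ_m ⟨η̃_m, X̃_m(U − Ū)r_m⟩ + sqrt(Σ_m ‖η̃_m'X̃_mŪ‖²_{V̄_m^{-1}}) · sqrt(2 Σ_m ‖X̃_m(Ū − U)r_m‖²) + 2 sqrt(λ̄)·ζ̄·sqrt(Σ_m ‖X̃_m(Ŵβ̂_m − W*β*_m)‖₂²), where V̄_m = Ū'Σ̃_mŪ + Ū'Σ̃_{m,dn}Ū, λ̄ = max_m λ̄_m, and ζ̄² = Σ_m ‖D_m‖_F². -/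

import Mathlib

open MeasureTheory Matrix Finset

noncomputable section

namespace JointLTI

/-- Euclidean (ℓ²) norm of a finite real vector. -/
def l2norm {n : Type*} [Fintype n] (v : n → ℝ) : ℝ := Real.sqrt (∑ i, v i ^ 2)

/-- Squared Euclidean norm of a finite real vector. -/
def sqNorm {n : Type*} [Fintype n] (v : n → ℝ) : ℝ := ∑ i, v i ^ 2

/-- ℓ∞ norm of a finite real vector. -/
def supNorm {n : Type*} [Fintype n] (v : n → ℝ) : ℝ := ⨆ i, |v i|

/-- Maximum absolute row sum, i.e. the ℓ∞ → ℓ∞ operator norm, of a complex matrix. -/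
def rowSumNorm {n m : Type*} [Fintype m] (A : Matrix n m ℂ) : ℝ := ⨆ i, ∑ j, ‖A i j‖

/-- The ℓ∞ → ℓ² operator norm of a complex matrix. -/
def infToTwoNorm {n m : Type*} [Fintype n] [Fintype m] (A : Matrix n m ℂ) : ℝ :=
  ⨆ v : {v : m → ℂ // ∀ j, ‖v j‖ ≤ 1},
    Real.sqrt (∑ i, ‖A.mulVec v.1 i‖ ^ 2)

/-- Spectral norm (ℓ² → ℓ² operator norm) of a real matrix. -/
def spectralNorm {n m : Type*} [Fintype n] [Fintype m] (A : Matrix n m ℝ) : ℝ :=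
  ⨆ v : {v : m → ℝ // ∑ i, v i ^ 2 ≤ 1}, l2norm (A.mulVec v.1)

/-- Squared Frobenius norm of a real matrix. -/
def frobSq {n m : Type*} [Fintype n] [Fintype m] (A : Matrix n m ℝ) : ℝ := ∑ i, ∑ j, A i j ^ 2

/-- Frobenius norm of a real matrix. -/
def frobNorm {n m : Type*} [Fintype n] [Fintype m] (A : Matrix n m ℝ) : ℝ :=
  Real.sqrt (frobSq A)

/-- The Jordan block of size `l` for the eigenvalue `lam`:
`lam` on the diagonal, ones on the superdiagonal, zeros elsewhere. -/
def jordanBlock (l : ℕ) (lam : ℂ) : Matrix (Fin l) (Fin l) ℂ :=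
  Matrix.of fun i j =>
    if (j : ℕ) = (i : ℕ) then lam else if (j : ℕ) = (i : ℕ) + 1 then 1 else 0

/-- The data of a block-diagonal Jordan matrix of total dimension `d`:
`q` blocks, of sizes `bs i`, with eigenvalues `ev i`. -/
structure JordanData (d : ℕ) where
  q : ℕ
  bs : Fin q → ℕ
  ev : Fin q → ℂ
  hsum : ∑ i, bs i = d

/-- Starting index of the `i`-th Jordan block. -/
def blockStart {q : ℕ} (bs : Fin q → ℕ) (i : Fin q) : ℕ :=
  ∑ j : Fin q, if (j : ℕ) < (i : ℕ) then bs j else 0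

/-- The block-diagonal Jordan matrix described by `J`: the Jordan blocks
`jordanBlock (J.bs i) (J.ev i)` are laid out consecutively along the diagonal. -/
def JordanData.mat {d : ℕ} (J : JordanData d) : Matrix (Fin d) (Fin d) ℂ :=
  Matrix.of fun a b =>
    ∑ i : Fin J.q,
      if blockStart J.bs i ≤ (a : ℕ) ∧ (a : ℕ) < blockStart J.bs i + J.bs i then
        (if (b : ℕ) = (a : ℕ) then J.ev i
         else if (b : ℕ) = (a : ℕ) + 1 ∧ (a : ℕ) + 1 < blockStart J.bs i + J.bs i then 1
         else 0)
      else 0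

/-- Size of the largest Jordan block. -/
def JordanData.lstar {d : ℕ} (J : JordanData d) : ℕ := Finset.univ.sup J.bs

/-- Magnitude of the largest eigenvalue (the spectral radius). -/
def JordanData.rho1 {d : ℕ} (J : JordanData d) : ℝ := ⨆ i, ‖J.ev i‖

/-- `ξ = ‖P⁻¹‖_{∞→2} ‖P‖_∞`. -/
def xiOf {d : ℕ} (P : Matrix (Fin d) (Fin d) ℂ) : ℝ := infToTwoNorm P⁻¹ * rowSumNorm P

/-- `f(Λ) = e^{1/|λ₁|} [ (l*-1)/(-log |λ₁|) + (l*-1)! / (-log |λ₁|)^{l*} ]`. -/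
def fJordan {d : ℕ} (J : JordanData d) : ℝ :=
  Real.exp (1 / J.rho1) *
    (((J.lstar : ℝ) - 1) / (-Real.log J.rho1) +
      (Nat.factorial (J.lstar - 1) : ℝ) / (-Real.log J.rho1) ^ J.lstar)

/-- `α(A) = ξ f(Λ)` when `|λ₁| < 1`, and `α(A) = ξ e^{ρ+1}` otherwise. -/
def alphaOf {d : ℕ} (P : Matrix (Fin d) (Fin d) ℂ) (J : JordanData d) (ρ : ℝ) : ℝ :=
  if J.rho1 < 1 then xiOf P * fJordan J else xiOf P * Real.exp (ρ + 1)

/-- The covariance upper bound `λ̄` of the covariance bound theorem: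
`α(A)² b̄² T` in the stable case and `α(A)² b̄² T^{2l*+1}` otherwise. -/
def lamBarOf {d : ℕ} (P : Matrix (Fin d) (Fin d) ℂ) (J : JordanData d) (ρ bbar : ℝ)
    (T : ℕ) : ℝ :=
  alphaOf P J ρ ^ 2 * bbar ^ 2 *
    (if J.rho1 < 1 then (T : ℝ) else (T : ℝ) ^ (2 * J.lstar + 1))

/-- Loewner partial order on real symmetric matrices: `A ⪯ B` iff `B - A` is
positive semidefinite. -/
def loewnerLE {n : Type*} [Fintype n] (A B : Matrix n n ℝ) : Prop := (B - A).PosSemidef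

/-- Smallest eigenvalue of a symmetric real matrix (infimum of the Rayleigh quotient). -/
def minEig {d : ℕ} (C : Matrix (Fin d) (Fin d) ℝ) : ℝ :=
  ⨅ u : {u : Fin d → ℝ // ∑ i, u i ^ 2 = 1}, u.1 ⬝ᵥ C.mulVec u.1

/-- Largest eigenvalue of a symmetric real matrix (supremum of the Rayleigh quotient). -/
def maxEig {d : ℕ} (C : Matrix (Fin d) (Fin d) ℝ) : ℝ :=
  ⨆ u : {u : Fin d → ℝ // ∑ i, u i ^ 2 = 1}, u.1 ⬝ᵥ C.mulVec u.1

open scoped Classical in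
/-- Inverse of the positive semidefinite square root of a matrix. -/
def matSqrtInv {d : ℕ} (A : Matrix (Fin d) (Fin d) ℝ) : Matrix (Fin d) (Fin d) ℝ :=
  if h : A.PosSemidef then
    ((h.1.eigenvectorUnitary : Matrix (Fin d) (Fin d) ℝ) *
      diagonal ((↑) ∘ (Real.sqrt ·) ∘ h.1.eigenvalues) *
      (star h.1.eigenvectorUnitary : Matrix (Fin d) (Fin d) ℝ))⁻¹ else 0

/-- Sample covariance matrix `Σ = ∑_{t=0}^{T-1} x(t) x(t)'`. -/
def sampleCov {d : ℕ} (T : ℕ) (xv : ℕ → Fin d → ℝ) : Matrix (Fin d) (Fin d) ℝ :=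
  ∑ t ∈ Finset.range T, vecMulVec (xv t) (xv t)

/-- `b_T(δ) = sqrt(2σ² log(2dMT/δ))`. -/
def bT (d M T : ℕ) (σ δ : ℝ) : ℝ :=
  Real.sqrt (2 * σ ^ 2 * Real.log (2 * d * M * T / δ))

/-- The vectorized design matrix `X̃ ∈ ℝ^{Td × d²}`: its row `(t,j)` is the vector
`x̃_j(t)` which carries `x(t)` in the `j`-th size-`d` block and zeros elsewhere. -/
def designMat {d : ℕ} (T : ℕ) (xv : ℕ → Fin d → ℝ) :
    Matrix (Fin T × Fin d) (Fin d × Fin d) ℝ :=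
  Matrix.of fun p q => if q.1 = p.2 then xv (p.1 : ℕ) q.2 else 0

/-- The stacked noise vector `η̃ ∈ ℝ^{Td}`, concatenating `η(1),…,η(T)`. -/
def noiseStack {d : ℕ} (T : ℕ) (e : ℕ → Fin d → ℝ) : Fin T × Fin d → ℝ :=
  fun p => e ((p.1 : ℕ) + 1) p.2

/-- The noise processes `η_m` are adapted to `ℱ`, and are mean-zero, conditionally
`σ`-sub-Gaussian martingale differences. -/
def SubGaussianMDS {Ω : Type*} [mΩ : MeasurableSpace Ω] (μ : Measure Ω)
    (ℱ : Filtration ℕ mΩ) {d M : ℕ} (η : Fin M → ℕ → Ω → Fin d → ℝ) (σ : ℝ) : Prop :=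
  (∀ m t i, StronglyMeasurable[ℱ t] fun ω => η m t ω i) ∧
  (∀ m t i, μ[fun ω => η m (t + 1) ω i | ℱ t] =ᵐ[μ] 0) ∧
  (∀ m t (l : Fin d → ℝ),
    μ[fun ω => Real.exp (∑ i, l i * η m (t + 1) ω i) | ℱ t]
      ≤ᵐ[μ] fun _ => Real.exp ((∑ i, l i ^ 2) * σ ^ 2 / 2))

/-- The noise processes have conditional covariance `C`. -/
def CondCov {Ω : Type*} [mΩ : MeasurableSpace Ω] (μ : Measure Ω)
    (ℱ : Filtration ℕ mΩ) {d M : ℕ} (η : Fin M → ℕ → Ω → Fin d → ℝ)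
    (C : Matrix (Fin d) (Fin d) ℝ) : Prop :=
  ∀ m t i j, μ[fun ω => η m (t + 1) ω i * η m (t + 1) ω j | ℱ t] =ᵐ[μ] fun _ => C i j



/-! ### Auxiliary lemmas for Statement 18 -/

lemma sqNorm_nonneg {n : Type*} [Fintype n] (v : n → ℝ) : 0 ≤ sqNorm v :=
  Finset.sum_nonneg fun i _ => sq_nonneg _

lemma dot_self_eq_sqNorm {n : Type*} [Fintype n] (v : n → ℝ) : v ⬝ᵥ v = sqNorm v := by
  simp [sqNorm, dotProduct, sq]

lemma sqNorm_neg {n : Type*} [Fintype n] (v : n → ℝ) : sqNorm (-v) = sqNorm v := by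
  simp [sqNorm]

lemma cs_sum {ι : Type*} [Fintype ι] (f g : ι → ℝ) :
    ∑ i, f i * g i ≤ Real.sqrt (∑ i, f i ^ 2) * Real.sqrt (∑ i, g i ^ 2) := by
  have h := Finset.sum_mul_sq_le_sq_mul_sq Finset.univ f g
  calc ∑ i, f i * g i ≤ |∑ i, f i * g i| := le_abs_self _
    _ = Real.sqrt ((∑ i, f i * g i) ^ 2) := (Real.sqrt_sq_eq_abs _).symm
    _ ≤ Real.sqrt ((∑ i, f i ^ 2) * (∑ i, g i ^ 2)) := Real.sqrt_le_sqrt h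
    _ = _ := Real.sqrt_mul (Finset.sum_nonneg fun i _ => sq_nonneg _) _

lemma minkowski_sum {ι : Type*} [Fintype ι] (f g : ι → ℝ) :
    Real.sqrt (∑ i, (f i + g i) ^ 2) ≤
      Real.sqrt (∑ i, f i ^ 2) + Real.sqrt (∑ i, g i ^ 2) := by
  have hf : 0 ≤ ∑ i, f i ^ 2 := Finset.sum_nonneg fun i _ => sq_nonneg _
  have hg : 0 ≤ ∑ i, g i ^ 2 := Finset.sum_nonneg fun i _ => sq_nonneg _
  have hcs := cs_sum f g
  have hexp : ∑ i, (f i + g i) ^ 2 = (∑ i, f i ^ 2) + 2 * (∑ i, f i * g i) + ∑ i, g i ^ 2 := by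
    rw [Finset.mul_sum, ← Finset.sum_add_distrib, ← Finset.sum_add_distrib]
    exact Finset.sum_congr rfl fun i _ => by ring
  have h1 : ∑ i, (f i + g i) ^ 2 ≤ (Real.sqrt (∑ i, f i ^ 2) + Real.sqrt (∑ i, g i ^ 2)) ^ 2 := by
    rw [hexp, add_sq, Real.sq_sqrt hf, Real.sq_sqrt hg]
    nlinarith [hcs]
  calc Real.sqrt (∑ i, (f i + g i) ^ 2) ≤
      Real.sqrt ((Real.sqrt (∑ i, f i ^ 2) + Real.sqrt (∑ i, g i ^ 2)) ^ 2) :=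
        Real.sqrt_le_sqrt h1
    _ = _ := Real.sqrt_sq (by positivity)

lemma psd_cs {n : Type*} [Fintype n] {P : Matrix n n ℝ} (hP : P.PosSemidef)
    (u w : n → ℝ) : (u ⬝ᵥ P *ᵥ w) ^ 2 ≤ (u ⬝ᵥ P *ᵥ u) * (w ⬝ᵥ P *ᵥ w) := by
  have hPt : Pᵀ = P := by
    have := hP.1
    simpa [Matrix.IsHermitian, Matrix.conjTranspose_eq_transpose_of_trivial] using this.eq
  have hsym : ∀ a b : n → ℝ, a ⬝ᵥ P *ᵥ b = b ⬝ᵥ P *ᵥ a := by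
    intro a b
    rw [Matrix.dotProduct_mulVec, ← Matrix.mulVec_transpose, hPt, dotProduct_comm]
  have hq : ∀ t : ℝ, 0 ≤ (w ⬝ᵥ P *ᵥ w) * (t * t) + (2 * (u ⬝ᵥ P *ᵥ w)) * t + (u ⬝ᵥ P *ᵥ u) := by
    intro t
    have h0 := hP.dotProduct_mulVec_nonneg (u + t • w)
    have hexp : (u + t • w) ⬝ᵥ P *ᵥ (u + t • w)
        = (w ⬝ᵥ P *ᵥ w) * (t * t) + (2 * (u ⬝ᵥ P *ᵥ w)) * t + (u ⬝ᵥ P *ᵥ u) := by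
      rw [Matrix.mulVec_add, Matrix.mulVec_smul, dotProduct_add, add_dotProduct,
        add_dotProduct, dotProduct_smul, smul_dotProduct, smul_dotProduct,
        dotProduct_smul, hsym w u]
      simp [smul_eq_mul]; ring
    simpa [hexp] using h0
  have hd := discrim_le_zero hq
  rw [discrim] at hd
  nlinarith [hd]

lemma pd_cs {n : Type*} [Fintype n] [DecidableEq n] {V : Matrix n n ℝ} (hV : V.PosDef)
    (z r : n → ℝ) :
    z ⬝ᵥ r ≤ Real.sqrt (z ⬝ᵥ V⁻¹ *ᵥ z) * Real.sqrt (r ⬝ᵥ V *ᵥ r) := by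
  have hVt : Vᵀ = V := by
    have := hV.1
    simpa [Matrix.IsHermitian, Matrix.conjTranspose_eq_transpose_of_trivial] using this.eq
  have hinv : V * V⁻¹ = 1 := Matrix.mul_nonsing_inv V hV.det_pos.ne'.isUnit
  have hVa : V *ᵥ (V⁻¹ *ᵥ z) = z := by
    rw [Matrix.mulVec_mulVec, hinv, Matrix.one_mulVec]
  have hav : (V⁻¹ *ᵥ z) ᵥ* V = V *ᵥ (V⁻¹ *ᵥ z) := by
    rw [← Matrix.mulVec_transpose, hVt]
  have hzr : z ⬝ᵥ r = (V⁻¹ *ᵥ z) ⬝ᵥ V *ᵥ r := by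
    rw [Matrix.dotProduct_mulVec, hav, hVa]
  have haa : (V⁻¹ *ᵥ z) ⬝ᵥ V *ᵥ (V⁻¹ *ᵥ z) = z ⬝ᵥ V⁻¹ *ᵥ z := by
    rw [hVa, dotProduct_comm]
  have hkey := psd_cs hV.posSemidef (V⁻¹ *ᵥ z) r
  rw [haa] at hkey
  have h1 : 0 ≤ z ⬝ᵥ V⁻¹ *ᵥ z := by
    have := hV.inv.posSemidef.dotProduct_mulVec_nonneg z; simpa using this
  have h2 : 0 ≤ r ⬝ᵥ V *ᵥ r := by
    have := hV.posSemidef.dotProduct_mulVec_nonneg r; simpa using this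
  calc z ⬝ᵥ r ≤ |z ⬝ᵥ r| := le_abs_self _
    _ = Real.sqrt ((z ⬝ᵥ r) ^ 2) := (Real.sqrt_sq_eq_abs _).symm
    _ ≤ Real.sqrt ((z ⬝ᵥ V⁻¹ *ᵥ z) * (r ⬝ᵥ V *ᵥ r)) := by
        apply Real.sqrt_le_sqrt
        calc (z ⬝ᵥ r) ^ 2 = ((V⁻¹ *ᵥ z) ⬝ᵥ V *ᵥ r) ^ 2 := by rw [hzr]
          _ ≤ _ := hkey
    _ = _ := Real.sqrt_mul h1 _



lemma sqNorm_sub {n : Type*} [Fintype n] (a g : n → ℝ) :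
    sqNorm (a - g) = sqNorm a - 2 * (a ⬝ᵥ g) + sqNorm g := by
  have h : ∀ i, (a i - g i) ^ 2 = a i ^ 2 - 2 * (a i * g i) + g i ^ 2 := fun i => by ring
  simp only [sqNorm, dotProduct, Pi.sub_apply, h, Finset.sum_add_distrib,
    Finset.sum_sub_distrib, Finset.mul_sum]

lemma dot_trans {α β : Type*} [Fintype α] [Fintype β] (A : Matrix α β ℝ)
    (v : β → ℝ) (w : α → ℝ) : v ⬝ᵥ (Aᵀ *ᵥ w) = (A *ᵥ v) ⬝ᵥ w := by
  rw [Matrix.dotProduct_mulVec, Matrix.vecMul_transpose]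

lemma sqNorm_pos_of_ne {n : Type*} [Fintype n] {v : n → ℝ} (hv : v ≠ 0) : 0 < sqNorm v := by
  rcases (sqNorm_nonneg v).lt_or_eq with h | h
  · exact h
  · exfalso
    apply hv
    funext i
    have h0 := (Finset.sum_eq_zero_iff_of_nonneg (fun i _ => sq_nonneg (v i))).1 h.symm i
      (Finset.mem_univ i)
    have := sq_eq_zero_iff.1 h0
    simpa using this

lemma sqNorm_orth {α β : Type*} [Fintype α] [Fintype β] [DecidableEq β]
    {A : Matrix α β ℝ} (hA : Aᵀ * A = 1) (v : β → ℝ) : sqNorm (A *ᵥ v) = sqNorm v := by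
  rw [← dot_self_eq_sqNorm, ← dot_self_eq_sqNorm v]
  rw [← dot_trans A v (A *ᵥ v), Matrix.mulVec_mulVec, hA, Matrix.one_mulVec]

lemma core {ιT ιD : Type*} [Fintype ιT] [Fintype ιD] [DecidableEq ιD] {M k : ℕ}
    (X : Fin M → Matrix ιT ιD ℝ) (e y : Fin M → ιT → ℝ)
    (θ θ' dv : Fin M → ιD → ℝ) (c : ℝ) (hc : 0 < c)
    (U Ubar : Matrix ιD (Fin (2 * k)) ℝ) (hU : Uᵀ * U = 1) (hUbar : Ubarᵀ * Ubar = 1)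
    (r : Fin M → Fin (2 * k) → ℝ)
    (hfact : ∀ m, θ' m - θ m = U.mulVec (r m))
    (hy : ∀ m, y m = (X m).mulVec (θ m) + (X m).mulVec (dv m) + e m)
    (hopt : ∑ m, sqNorm (y m - (X m).mulVec (θ' m)) ≤
      ∑ m, sqNorm (y m - (X m).mulVec (θ m)))
    (hlow : ∀ m (u : ιD → ℝ), c * sqNorm u ≤ sqNorm ((X m).mulVec u))
    (lamBar : Fin M → ℝ) (ds : Fin M → ℝ) (hds : ∀ m, 0 ≤ ds m)
    (hup : ∀ m, sqNorm ((X m).mulVec (dv m)) ≤ lamBar m * ds m)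
    (lamSup : ℝ) (hlamSup0 : 0 ≤ lamSup) (hlamsup : ∀ m, lamBar m ≤ lamSup) :
    1 / 2 * ∑ m, sqNorm ((X m).mulVec (θ m - θ' m)) ≤
      Real.sqrt (∑ m,
          Ubarᵀ.mulVec ((X m)ᵀ.mulVec (e m)) ⬝ᵥ
            (Ubarᵀ * ((X m)ᵀ * X m) * Ubar + Ubarᵀ * (c • (1 : Matrix ιD ιD ℝ)) * Ubar)⁻¹.mulVec
              (Ubarᵀ.mulVec ((X m)ᵀ.mulVec (e m)))) *
        Real.sqrt (2 * ∑ m, sqNorm ((X m).mulVec (θ m - θ' m))) +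
      (∑ m, e m ⬝ᵥ (X m).mulVec ((U - Ubar).mulVec (r m))) +
      Real.sqrt (∑ m,
          Ubarᵀ.mulVec ((X m)ᵀ.mulVec (e m)) ⬝ᵥ
            (Ubarᵀ * ((X m)ᵀ * X m) * Ubar + Ubarᵀ * (c • (1 : Matrix ιD ιD ℝ)) * Ubar)⁻¹.mulVec
              (Ubarᵀ.mulVec ((X m)ᵀ.mulVec (e m)))) *
        Real.sqrt (2 * ∑ m, sqNorm ((X m).mulVec ((Ubar - U).mulVec (r m)))) +
      2 * Real.sqrt lamSup * Real.sqrt (∑ m, ds m) *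
        Real.sqrt (∑ m, sqNorm ((X m).mulVec (θ' m - θ m))) := by
  classical
  -- the weight matrix is positive definite
  have hVeq : Ubarᵀ * (c • (1 : Matrix ιD ιD ℝ)) * Ubar
      = c • (1 : Matrix (Fin (2 * k)) (Fin (2 * k)) ℝ) := by
    rw [Matrix.mul_smul, Matrix.mul_one, Matrix.smul_mul, hUbar]
  have hquad : ∀ m (s : Fin (2 * k) → ℝ),
      s ⬝ᵥ (Ubarᵀ * ((X m)ᵀ * X m) * Ubar + Ubarᵀ * (c • (1 : Matrix ιD ιD ℝ)) * Ubar) *ᵥ s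
        = sqNorm (X m *ᵥ (Ubar *ᵥ s)) + c * sqNorm s := by
    intro m s
    rw [Matrix.add_mulVec, dotProduct_add, hVeq]
    congr 1
    · rw [← Matrix.mulVec_mulVec, ← Matrix.mulVec_mulVec, ← Matrix.mulVec_mulVec,
        dot_trans, dot_trans, dot_self_eq_sqNorm]
    · rw [Matrix.smul_mulVec, Matrix.one_mulVec, dotProduct_smul, smul_eq_mul,
        dot_self_eq_sqNorm]
  have hVpd : ∀ m,
      (Ubarᵀ * ((X m)ᵀ * X m) * Ubar + Ubarᵀ * (c • (1 : Matrix ιD ιD ℝ)) * Ubar).PosDef := by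
    intro m
    refine Matrix.PosDef.of_dotProduct_mulVec_pos ?_ ?_
    · show _ᴴ = _
      have hct : ∀ B : Matrix (Fin (2 * k)) (Fin (2 * k)) ℝ, Bᴴ = Bᵀ := fun B => rfl
      rw [hct]
      simp [Matrix.transpose_add, Matrix.transpose_mul, Matrix.transpose_smul,
        Matrix.transpose_one, Matrix.mul_assoc]
    · intro s hs
      have hst : star s = s := rfl
      rw [hst, hquad m s]
      have h1 : 0 ≤ sqNorm (X m *ᵥ (Ubar *ᵥ s)) := sqNorm_nonneg _
      have h2 : 0 < c * sqNorm s := mul_pos hc (sqNorm_pos_of_ne hs)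
      linarith
  -- basic inequality
  have hneg : ∀ m, X m *ᵥ (θ m - θ' m) = -(X m *ᵥ (U *ᵥ r m)) := by
    intro m
    rw [← hfact m, Matrix.mulVec_sub, Matrix.mulVec_sub, neg_sub]
  have hbasic : ∑ m, sqNorm (X m *ᵥ (θ m - θ' m)) ≤
      2 * ∑ m, e m ⬝ᵥ (X m *ᵥ (U *ᵥ r m)) +
      2 * ∑ m, (X m *ᵥ dv m) ⬝ᵥ (X m *ᵥ (U *ᵥ r m)) := by
    have hid : ∀ m, y m - (X m).mulVec (θ' m) =
        (e m + X m *ᵥ dv m) - X m *ᵥ (U *ᵥ r m) := by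
      intro m
      rw [hy m, ← hfact m, Matrix.mulVec_sub]
      abel
    have hid2 : ∀ m, y m - (X m).mulVec (θ m) = e m + X m *ᵥ dv m := by
      intro m; rw [hy m]; abel
    have hopt' : ∑ m, sqNorm ((e m + X m *ᵥ dv m) - X m *ᵥ (U *ᵥ r m)) ≤
        ∑ m, sqNorm (e m + X m *ᵥ dv m) := by
      simpa only [hid, hid2] using hopt
    have hexp : ∀ m, sqNorm ((e m + X m *ᵥ dv m) - X m *ᵥ (U *ᵥ r m)) =
        sqNorm (e m + X m *ᵥ dv m) - 2 * ((e m + X m *ᵥ dv m) ⬝ᵥ (X m *ᵥ (U *ᵥ r m)))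
          + sqNorm (X m *ᵥ (U *ᵥ r m)) := fun m => sqNorm_sub _ _
    have hsum : ∑ m, sqNorm ((e m + X m *ᵥ dv m) - X m *ᵥ (U *ᵥ r m)) =
        ∑ m, sqNorm (e m + X m *ᵥ dv m)
          - 2 * ∑ m, ((e m + X m *ᵥ dv m) ⬝ᵥ (X m *ᵥ (U *ᵥ r m)))
          + ∑ m, sqNorm (X m *ᵥ (U *ᵥ r m)) := by
      rw [Finset.mul_sum, ← Finset.sum_sub_distrib, ← Finset.sum_add_distrib]
      exact Finset.sum_congr rfl fun m _ => hexp m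
    have hdot : ∀ m, (e m + X m *ᵥ dv m) ⬝ᵥ (X m *ᵥ (U *ᵥ r m)) =
        e m ⬝ᵥ (X m *ᵥ (U *ᵥ r m)) + (X m *ᵥ dv m) ⬝ᵥ (X m *ᵥ (U *ᵥ r m)) :=
      fun m => add_dotProduct _ _ _
    have hsum2 : ∑ m, ((e m + X m *ᵥ dv m) ⬝ᵥ (X m *ᵥ (U *ᵥ r m))) =
        ∑ m, e m ⬝ᵥ (X m *ᵥ (U *ᵥ r m)) + ∑ m, (X m *ᵥ dv m) ⬝ᵥ (X m *ᵥ (U *ᵥ r m)) := by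
      rw [← Finset.sum_add_distrib]
      exact Finset.sum_congr rfl fun m _ => hdot m
    have hSveq : ∑ m, sqNorm (X m *ᵥ (θ m - θ' m)) = ∑ m, sqNorm (X m *ᵥ (U *ᵥ r m)) :=
      Finset.sum_congr rfl fun m _ => by rw [hneg m, sqNorm_neg]
    rw [hsum, hsum2] at hopt'
    rw [hSveq]
    linarith
  -- split the noise term
  have hsplit : ∀ m, e m ⬝ᵥ (X m *ᵥ (U *ᵥ r m)) =
      e m ⬝ᵥ (X m *ᵥ (Ubar *ᵥ r m)) + e m ⬝ᵥ (X m *ᵥ ((U - Ubar) *ᵥ r m)) := by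
    intro m
    rw [Matrix.sub_mulVec, Matrix.mulVec_sub, dotProduct_sub]
    ring
  have hz : ∀ m, e m ⬝ᵥ (X m *ᵥ (Ubar *ᵥ r m)) = (Ubarᵀ *ᵥ ((X m)ᵀ *ᵥ e m)) ⬝ᵥ r m := by
    intro m
    rw [dotProduct_comm (Ubarᵀ *ᵥ ((X m)ᵀ *ᵥ e m)) (r m), dot_trans, dot_trans,
      dotProduct_comm]
  -- weighted Cauchy-Schwarz over m
  have hZnn : ∀ m, 0 ≤ (Ubarᵀ *ᵥ ((X m)ᵀ *ᵥ e m)) ⬝ᵥ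
      (Ubarᵀ * ((X m)ᵀ * X m) * Ubar + Ubarᵀ * (c • (1 : Matrix ιD ιD ℝ)) * Ubar)⁻¹ *ᵥ
        (Ubarᵀ *ᵥ ((X m)ᵀ *ᵥ e m)) := by
    intro m
    have := (hVpd m).inv.posSemidef.dotProduct_mulVec_nonneg (Ubarᵀ *ᵥ ((X m)ᵀ *ᵥ e m))
    simpa using this
  have hQnn : ∀ m, 0 ≤ r m ⬝ᵥ
      (Ubarᵀ * ((X m)ᵀ * X m) * Ubar + Ubarᵀ * (c • (1 : Matrix ιD ιD ℝ)) * Ubar) *ᵥ r m := by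
    intro m
    have := (hVpd m).posSemidef.dotProduct_mulVec_nonneg (r m)
    simpa using this
  have h4 : ∑ m, (Ubarᵀ *ᵥ ((X m)ᵀ *ᵥ e m)) ⬝ᵥ r m ≤
      Real.sqrt (∑ m, (Ubarᵀ *ᵥ ((X m)ᵀ *ᵥ e m)) ⬝ᵥ
        (Ubarᵀ * ((X m)ᵀ * X m) * Ubar + Ubarᵀ * (c • (1 : Matrix ιD ιD ℝ)) * Ubar)⁻¹ *ᵥ
          (Ubarᵀ *ᵥ ((X m)ᵀ *ᵥ e m))) *
      Real.sqrt (∑ m, r m ⬝ᵥ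
        (Ubarᵀ * ((X m)ᵀ * X m) * Ubar + Ubarᵀ * (c • (1 : Matrix ιD ιD ℝ)) * Ubar) *ᵥ r m) := by
    calc ∑ m, (Ubarᵀ *ᵥ ((X m)ᵀ *ᵥ e m)) ⬝ᵥ r m
        ≤ ∑ m, Real.sqrt ((Ubarᵀ *ᵥ ((X m)ᵀ *ᵥ e m)) ⬝ᵥ
            (Ubarᵀ * ((X m)ᵀ * X m) * Ubar + Ubarᵀ * (c • (1 : Matrix ιD ιD ℝ)) * Ubar)⁻¹ *ᵥ
              (Ubarᵀ *ᵥ ((X m)ᵀ *ᵥ e m))) *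
          Real.sqrt (r m ⬝ᵥ
            (Ubarᵀ * ((X m)ᵀ * X m) * Ubar + Ubarᵀ * (c • (1 : Matrix ιD ιD ℝ)) * Ubar) *ᵥ r m) :=
          Finset.sum_le_sum fun m _ => pd_cs (hVpd m) _ _
      _ ≤ Real.sqrt (∑ m, Real.sqrt ((Ubarᵀ *ᵥ ((X m)ᵀ *ᵥ e m)) ⬝ᵥ
            (Ubarᵀ * ((X m)ᵀ * X m) * Ubar + Ubarᵀ * (c • (1 : Matrix ιD ιD ℝ)) * Ubar)⁻¹ *ᵥ
              (Ubarᵀ *ᵥ ((X m)ᵀ *ᵥ e m))) ^ 2) *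
          Real.sqrt (∑ m, Real.sqrt (r m ⬝ᵥ
            (Ubarᵀ * ((X m)ᵀ * X m) * Ubar + Ubarᵀ * (c • (1 : Matrix ιD ιD ℝ)) * Ubar) *ᵥ r m) ^ 2) :=
          cs_sum _ _
      _ = _ := by
          congr 1
          · congr 1
            exact Finset.sum_congr rfl fun m _ => Real.sq_sqrt (hZnn m)
          · congr 1
            exact Finset.sum_congr rfl fun m _ => Real.sq_sqrt (hQnn m)
  -- bound the V-weighted norm of r
  have h5 : ∀ m, r m ⬝ᵥ
      (Ubarᵀ * ((X m)ᵀ * X m) * Ubar + Ubarᵀ * (c • (1 : Matrix ιD ιD ℝ)) * Ubar) *ᵥ r m ≤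
      2 * sqNorm (X m *ᵥ (Ubar *ᵥ r m)) := by
    intro m
    rw [hquad m (r m)]
    have h1 : c * sqNorm (r m) ≤ sqNorm (X m *ᵥ (Ubar *ᵥ r m)) := by
      have := hlow m (Ubar *ᵥ r m)
      rwa [sqNorm_orth hUbar] at this
    linarith
  -- Minkowski step
  have h6 : Real.sqrt (∑ m, sqNorm (X m *ᵥ (Ubar *ᵥ r m))) ≤
      Real.sqrt (∑ m, sqNorm (X m *ᵥ (θ m - θ' m))) +
      Real.sqrt (∑ m, sqNorm (X m *ᵥ ((Ubar - U) *ᵥ r m))) := by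
    have hpt : ∀ m, X m *ᵥ (Ubar *ᵥ r m) =
        -(X m *ᵥ (θ m - θ' m)) + X m *ᵥ ((Ubar - U) *ᵥ r m) := by
      intro m
      rw [hneg m, neg_neg, Matrix.sub_mulVec, Matrix.mulVec_sub]
      abel
    have key := minkowski_sum (ι := Fin M × ιT)
      (fun p => -((X p.1 *ᵥ (θ p.1 - θ' p.1)) p.2))
      (fun p => (X p.1 *ᵥ ((Ubar - U) *ᵥ r p.1)) p.2)
    have e1 : ∑ p : Fin M × ιT,
        (-((X p.1 *ᵥ (θ p.1 - θ' p.1)) p.2) + (X p.1 *ᵥ ((Ubar - U) *ᵥ r p.1)) p.2) ^ 2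
        = ∑ m, sqNorm (X m *ᵥ (Ubar *ᵥ r m)) := by
      rw [Fintype.sum_prod_type]
      refine Finset.sum_congr rfl fun m _ => Finset.sum_congr rfl fun t _ => ?_
      rw [hpt m]
      simp
    have e2 : ∑ p : Fin M × ιT, (-((X p.1 *ᵥ (θ p.1 - θ' p.1)) p.2)) ^ 2
        = ∑ m, sqNorm (X m *ᵥ (θ m - θ' m)) := by
      rw [Fintype.sum_prod_type]
      exact Finset.sum_congr rfl fun m _ => Finset.sum_congr rfl fun t _ => by rw [neg_sq]
    have e3 : ∑ p : Fin M × ιT, ((X p.1 *ᵥ ((Ubar - U) *ᵥ r p.1)) p.2) ^ 2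
        = ∑ m, sqNorm (X m *ᵥ ((Ubar - U) *ᵥ r m)) := by
      rw [Fintype.sum_prod_type]
      exact Finset.sum_congr rfl fun m _ => rfl
    rw [e1, e2, e3] at key
    exact key
  -- misspecification term
  have hmis : ∑ m, (X m *ᵥ dv m) ⬝ᵥ (X m *ᵥ (U *ᵥ r m)) ≤
      Real.sqrt lamSup * Real.sqrt (∑ m, ds m) *
        Real.sqrt (∑ m, sqNorm (X m *ᵥ (θ m - θ' m))) := by
    have hSveq2 : ∑ m, sqNorm (X m *ᵥ (U *ᵥ r m)) = ∑ m, sqNorm (X m *ᵥ (θ m - θ' m)) :=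
      Finset.sum_congr rfl fun m _ => by rw [hneg m, sqNorm_neg]
    have hper : ∀ m, (X m *ᵥ dv m) ⬝ᵥ (X m *ᵥ (U *ᵥ r m)) ≤
        Real.sqrt (sqNorm (X m *ᵥ dv m)) * Real.sqrt (sqNorm (X m *ᵥ (U *ᵥ r m))) := by
      intro m
      have h := cs_sum (X m *ᵥ dv m) (X m *ᵥ (U *ᵥ r m))
      simpa [sqNorm, dotProduct] using h
    have h1 : ∑ m, sqNorm (X m *ᵥ dv m) ≤ lamSup * ∑ m, ds m := by
      rw [Finset.mul_sum]
      exact Finset.sum_le_sum fun m _ =>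
        (hup m).trans (mul_le_mul_of_nonneg_right (hlamsup m) (hds m))
    calc ∑ m, (X m *ᵥ dv m) ⬝ᵥ (X m *ᵥ (U *ᵥ r m))
        ≤ ∑ m, Real.sqrt (sqNorm (X m *ᵥ dv m)) * Real.sqrt (sqNorm (X m *ᵥ (U *ᵥ r m))) :=
          Finset.sum_le_sum fun m _ => hper m
      _ ≤ Real.sqrt (∑ m, Real.sqrt (sqNorm (X m *ᵥ dv m)) ^ 2) *
          Real.sqrt (∑ m, Real.sqrt (sqNorm (X m *ᵥ (U *ᵥ r m))) ^ 2) := cs_sum _ _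
      _ = Real.sqrt (∑ m, sqNorm (X m *ᵥ dv m)) *
          Real.sqrt (∑ m, sqNorm (X m *ᵥ (U *ᵥ r m))) := by
          congr 1
          · congr 1
            exact Finset.sum_congr rfl fun m _ => Real.sq_sqrt (sqNorm_nonneg _)
          · congr 1
            exact Finset.sum_congr rfl fun m _ => Real.sq_sqrt (sqNorm_nonneg _)
      _ ≤ Real.sqrt (lamSup * ∑ m, ds m) *
          Real.sqrt (∑ m, sqNorm (X m *ᵥ (U *ᵥ r m))) :=
          mul_le_mul_of_nonneg_right (Real.sqrt_le_sqrt h1) (Real.sqrt_nonneg _)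
      _ = Real.sqrt lamSup * Real.sqrt (∑ m, ds m) *
          Real.sqrt (∑ m, sqNorm (X m *ᵥ (θ m - θ' m))) := by
          rw [Real.sqrt_mul hlamSup0, hSveq2]
  -- put the pieces together
  have hSv' : ∑ m, sqNorm ((X m).mulVec (θ' m - θ m)) =
      ∑ m, sqNorm ((X m).mulVec (θ m - θ' m)) := by
    refine Finset.sum_congr rfl fun m _ => ?_
    rw [show θ' m - θ m = -(θ m - θ' m) from (neg_sub _ _).symm, Matrix.mulVec_neg, sqNorm_neg]
  rw [hSv']
  have hsum3 : ∑ m, e m ⬝ᵥ (X m *ᵥ (U *ᵥ r m)) =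
      ∑ m, (Ubarᵀ *ᵥ ((X m)ᵀ *ᵥ e m)) ⬝ᵥ r m +
      ∑ m, e m ⬝ᵥ (X m *ᵥ ((U - Ubar) *ᵥ r m)) := by
    rw [← Finset.sum_add_distrib]
    exact Finset.sum_congr rfl fun m _ => by rw [hsplit m, hz m]
  -- bound sqrt of Q
  have hQb : Real.sqrt (∑ m, r m ⬝ᵥ
      (Ubarᵀ * ((X m)ᵀ * X m) * Ubar + Ubarᵀ * (c • (1 : Matrix ιD ιD ℝ)) * Ubar) *ᵥ r m) ≤
      Real.sqrt (2 * ∑ m, sqNorm (X m *ᵥ (θ m - θ' m))) +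
      Real.sqrt (2 * ∑ m, sqNorm (X m *ᵥ ((Ubar - U) *ᵥ r m))) := by
    have hQle : ∑ m, r m ⬝ᵥ
        (Ubarᵀ * ((X m)ᵀ * X m) * Ubar + Ubarᵀ * (c • (1 : Matrix ιD ιD ℝ)) * Ubar) *ᵥ r m ≤
        2 * ∑ m, sqNorm (X m *ᵥ (Ubar *ᵥ r m)) := by
      rw [Finset.mul_sum]
      exact Finset.sum_le_sum fun m _ => h5 m
    have two_nn : (0:ℝ) ≤ 2 := by norm_num
    calc Real.sqrt (∑ m, r m ⬝ᵥ
          (Ubarᵀ * ((X m)ᵀ * X m) * Ubar + Ubarᵀ * (c • (1 : Matrix ιD ιD ℝ)) * Ubar) *ᵥ r m)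
        ≤ Real.sqrt (2 * ∑ m, sqNorm (X m *ᵥ (Ubar *ᵥ r m))) := Real.sqrt_le_sqrt hQle
      _ = Real.sqrt 2 * Real.sqrt (∑ m, sqNorm (X m *ᵥ (Ubar *ᵥ r m))) := Real.sqrt_mul two_nn _
      _ ≤ Real.sqrt 2 * (Real.sqrt (∑ m, sqNorm (X m *ᵥ (θ m - θ' m))) +
          Real.sqrt (∑ m, sqNorm (X m *ᵥ ((Ubar - U) *ᵥ r m)))) :=
          mul_le_mul_of_nonneg_left h6 (Real.sqrt_nonneg _)
      _ = _ := by
          rw [mul_add, ← Real.sqrt_mul two_nn, ← Real.sqrt_mul two_nn]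
  -- final combination
  have hsZnn : 0 ≤ Real.sqrt (∑ m, (Ubarᵀ *ᵥ ((X m)ᵀ *ᵥ e m)) ⬝ᵥ
      (Ubarᵀ * ((X m)ᵀ * X m) * Ubar + Ubarᵀ * (c • (1 : Matrix ιD ιD ℝ)) * Ubar)⁻¹ *ᵥ
        (Ubarᵀ *ᵥ ((X m)ᵀ *ᵥ e m))) := Real.sqrt_nonneg _
  have hzr_bound : ∑ m, (Ubarᵀ *ᵥ ((X m)ᵀ *ᵥ e m)) ⬝ᵥ r m ≤
      Real.sqrt (∑ m, (Ubarᵀ *ᵥ ((X m)ᵀ *ᵥ e m)) ⬝ᵥ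
        (Ubarᵀ * ((X m)ᵀ * X m) * Ubar + Ubarᵀ * (c • (1 : Matrix ιD ιD ℝ)) * Ubar)⁻¹ *ᵥ
          (Ubarᵀ *ᵥ ((X m)ᵀ *ᵥ e m))) *
        Real.sqrt (2 * ∑ m, sqNorm (X m *ᵥ (θ m - θ' m))) +
      Real.sqrt (∑ m, (Ubarᵀ *ᵥ ((X m)ᵀ *ᵥ e m)) ⬝ᵥ
        (Ubarᵀ * ((X m)ᵀ * X m) * Ubar + Ubarᵀ * (c • (1 : Matrix ιD ιD ℝ)) * Ubar)⁻¹ *ᵥ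
          (Ubarᵀ *ᵥ ((X m)ᵀ *ᵥ e m))) *
        Real.sqrt (2 * ∑ m, sqNorm (X m *ᵥ ((Ubar - U) *ᵥ r m))) := by
    calc ∑ m, (Ubarᵀ *ᵥ ((X m)ᵀ *ᵥ e m)) ⬝ᵥ r m ≤ _ := h4
      _ ≤ Real.sqrt (∑ m, (Ubarᵀ *ᵥ ((X m)ᵀ *ᵥ e m)) ⬝ᵥ
          (Ubarᵀ * ((X m)ᵀ * X m) * Ubar + Ubarᵀ * (c • (1 : Matrix ιD ιD ℝ)) * Ubar)⁻¹ *ᵥ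
            (Ubarᵀ *ᵥ ((X m)ᵀ *ᵥ e m))) *
          (Real.sqrt (2 * ∑ m, sqNorm (X m *ᵥ (θ m - θ' m))) +
           Real.sqrt (2 * ∑ m, sqNorm (X m *ᵥ ((Ubar - U) *ᵥ r m)))) :=
          mul_le_mul_of_nonneg_left hQb hsZnn
      _ = _ := by ring
  have hlast_nn : 0 ≤ Real.sqrt lamSup * Real.sqrt (∑ m, ds m) *
      Real.sqrt (∑ m, sqNorm (X m *ᵥ (θ m - θ' m))) := by positivity
  rw [hsum3] at hbasic
  linarith [hbasic, hmis, hzr_bound, hlast_nn]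


lemma designMat_mulVec_apply {d T : ℕ} (xv : ℕ → Fin d → ℝ) (u : Fin d × Fin d → ℝ)
    (p : Fin T × Fin d) :
    (designMat T xv).mulVec u p = ∑ i, xv (p.1 : ℕ) i * u (p.2, i) := by
  simp only [Matrix.mulVec, designMat, dotProduct, Matrix.of_apply]
  rw [Fintype.sum_prod_type]
  simp only [ite_mul, zero_mul]
  rw [Finset.sum_comm]
  simp [Finset.sum_ite_eq', Finset.mem_univ]

lemma quad_sampleCov {d : ℕ} (T : ℕ) (xv : ℕ → Fin d → ℝ) (w : Fin d → ℝ) :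
    w ⬝ᵥ (sampleCov T xv).mulVec w = ∑ t ∈ Finset.range T, (xv t ⬝ᵥ w) ^ 2 := by
  simp only [sampleCov, Matrix.mulVec, dotProduct, vecMulVec_apply, Matrix.sum_apply]
  calc ∑ i, w i * ∑ j, (∑ t ∈ Finset.range T, xv t i * xv t j) * w j
      = ∑ i, ∑ j, ∑ t ∈ Finset.range T, w i * (xv t i * xv t j * w j) := by
        refine Finset.sum_congr rfl fun i _ => ?_
        rw [Finset.mul_sum]
        refine Finset.sum_congr rfl fun j _ => ?_
        rw [Finset.sum_mul, Finset.mul_sum]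
    _ = ∑ i, ∑ t ∈ Finset.range T, ∑ j, w i * (xv t i * xv t j * w j) := by
        exact Finset.sum_congr rfl fun i _ => Finset.sum_comm
    _ = ∑ t ∈ Finset.range T, ∑ i, ∑ j, w i * (xv t i * xv t j * w j) := Finset.sum_comm
    _ = ∑ t ∈ Finset.range T, (∑ i, xv t i * w i) ^ 2 := by
        refine Finset.sum_congr rfl fun t _ => ?_
        rw [sq, Finset.sum_mul]
        refine Finset.sum_congr rfl fun i _ => ?_
        rw [Finset.mul_sum]
        exact Finset.sum_congr rfl fun j _ => by ring

lemma sqNorm_designMat {d T : ℕ} (xv : ℕ → Fin d → ℝ) (u : Fin d × Fin d → ℝ) :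
    sqNorm ((designMat T xv).mulVec u) =
      ∑ j : Fin d, (fun i => u (j, i)) ⬝ᵥ (sampleCov T xv).mulVec (fun i => u (j, i)) := by
  have h : ∀ j : Fin d, (fun i => u (j, i)) ⬝ᵥ (sampleCov T xv).mulVec (fun i => u (j, i))
      = ∑ t ∈ Finset.range T, (∑ i, xv t i * u (j, i)) ^ 2 := fun j => quad_sampleCov T xv _
  simp only [h]
  rw [Finset.sum_comm]
  simp only [sqNorm]
  rw [Fintype.sum_prod_type]
  rw [← Fin.sum_univ_eq_sum_range (fun t => ∑ j : Fin d, (∑ i, xv t i * u (j, i)) ^ 2) T]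
  exact Finset.sum_congr rfl fun t _ => Finset.sum_congr rfl fun j _ => by
    rw [designMat_mulVec_apply]

lemma loewner_quad {n : Type*} [Fintype n] {A B : Matrix n n ℝ} (h : loewnerLE A B)
    (w : n → ℝ) : w ⬝ᵥ A.mulVec w ≤ w ⬝ᵥ B.mulVec w := by
  have h0 := Matrix.PosSemidef.dotProduct_mulVec_nonneg (M := B - A) h w
  have hst : star w = w := rfl
  rw [hst, Matrix.sub_mulVec, dotProduct_sub] at h0
  linarith

lemma dot_smul_one {n : Type*} [Fintype n] [DecidableEq n] (c : ℝ) (w : n → ℝ) :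
    w ⬝ᵥ (c • (1 : Matrix n n ℝ)).mulVec w = c * sqNorm w := by
  rw [Matrix.smul_mulVec, Matrix.one_mulVec, dotProduct_smul, smul_eq_mul]
  congr 1
  simp [sqNorm, dotProduct, sq]

lemma block_lower {d T : ℕ} (xv : ℕ → Fin d → ℝ) (lam : ℝ)
    (h : loewnerLE (lam • (1 : Matrix (Fin d) (Fin d) ℝ)) (sampleCov T xv))
    (u : Fin d × Fin d → ℝ) :
    lam * sqNorm u ≤ sqNorm ((designMat T xv).mulVec u) := by
  rw [sqNorm_designMat]
  have hu : sqNorm u = ∑ j : Fin d, sqNorm (fun i => u (j, i)) := by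
    simp only [sqNorm]
    rw [Fintype.sum_prod_type]
  rw [hu, Finset.mul_sum]
  refine Finset.sum_le_sum fun j _ => ?_
  have := loewner_quad h (fun i => u (j, i))
  rwa [dot_smul_one] at this

lemma block_upper {d T : ℕ} (xv : ℕ → Fin d → ℝ) (lam : ℝ)
    (h : loewnerLE (sampleCov T xv) (lam • (1 : Matrix (Fin d) (Fin d) ℝ)))
    (u : Fin d × Fin d → ℝ) :
    sqNorm ((designMat T xv).mulVec u) ≤ lam * sqNorm u := by
  rw [sqNorm_designMat]
  have hu : sqNorm u = ∑ j : Fin d, sqNorm (fun i => u (j, i)) := by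
    simp only [sqNorm]
    rw [Fintype.sum_prod_type]
  rw [hu, Finset.mul_sum]
  refine Finset.sum_le_sum fun j _ => ?_
  have := loewner_quad h (fun i => u (j, i))
  rwa [dot_smul_one] at this


lemma minEig_pos {d : ℕ} (hd : 0 < d) {C : Matrix (Fin d) (Fin d) ℝ} (hC : C.PosDef) :
    0 < minEig C := by
  classical
  set S : Set (Fin d → ℝ) := {u | ∑ i, u i ^ 2 = 1} with hSdef
  have hg : Continuous fun u : Fin d → ℝ => ∑ i, u i ^ 2 :=
    continuous_finset_sum _ fun i _ => (continuous_apply i).pow 2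
  have hf : Continuous fun u : Fin d → ℝ => u ⬝ᵥ C.mulVec u := by
    simp only [dotProduct, Matrix.mulVec]
    exact continuous_finset_sum _ fun i _ => (continuous_apply i).mul
      (continuous_finset_sum _ fun j _ => continuous_const.mul (continuous_apply j))
  have hclosed : IsClosed S := by
    have : S = (fun u : Fin d → ℝ => ∑ i, u i ^ 2) ⁻¹' {1} := rfl
    rw [this]
    exact IsClosed.preimage hg isClosed_singleton
  have hsub : S ⊆ Metric.closedBall 0 1 := by
    intro u hu
    rw [Metric.mem_closedBall, dist_zero_right]
    rw [pi_norm_le_iff_of_nonneg (by norm_num)]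
    intro i
    rw [Real.norm_eq_abs]
    have h1 : u i ^ 2 ≤ 1 := by
      have := Finset.single_le_sum (f := fun j => u j ^ 2) (fun j _ => sq_nonneg (u j))
        (Finset.mem_univ i)
      calc u i ^ 2 ≤ ∑ j, u j ^ 2 := this
        _ = 1 := hu
    nlinarith [abs_nonneg (u i), sq_abs (u i)]
  have hcpt : IsCompact S :=
    (isCompact_closedBall (0 : Fin d → ℝ) 1).of_isClosed_subset hclosed hsub
  have hu0 : (fun i : Fin d => if i = ⟨0, hd⟩ then (1:ℝ) else 0) ∈ S := by
    have h : ∀ i : Fin d, ((if i = ⟨0, hd⟩ then (1:ℝ) else 0)) ^ 2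
        = if i = ⟨0, hd⟩ then (1:ℝ) else 0 := by
      intro i; by_cases h : i = ⟨0, hd⟩ <;> simp [h]
    simp only [hSdef, Set.mem_setOf_eq]
    simp only [h]
    simp
  have hne : S.Nonempty := ⟨_, hu0⟩
  obtain ⟨u, huS, hmin⟩ := hcpt.exists_isMinOn hne hf.continuousOn
  have hune : u ≠ 0 := by
    intro h0
    have : (1:ℝ) = 0 := by
      have := huS
      rw [hSdef] at this
      simp only [Set.mem_setOf_eq, h0] at this
      simpa using this.symm
    norm_num at this
  have hfu : 0 < u ⬝ᵥ C.mulVec u := by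
    have := hC.dotProduct_mulVec_pos hune
    simpa using this
  have hlb : u ⬝ᵥ C.mulVec u ≤ minEig C := by
    have : Nonempty {w : Fin d → ℝ // ∑ i, w i ^ 2 = 1} := ⟨⟨u, huS⟩⟩
    exact le_ciInf fun w => hmin w.2
  linarith

/-- Prediction error decomposition under the misspecified shared-basis
model: on the event `E_C` (`λ̲_m I ⪯ Σ_m ⪯ λ̄_m I` for all `m`), for any fixed orthonormal
`Ū ∈ ℝ^{d²×2k}`, the low-rank part of the total squared prediction error of the minimizers
`(Ŵ, B̂)` satisfies the four-term decomposition, the last term being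
`2 sqrt(λ̄) ζ̄ sqrt(∑_m ‖X̃_m(Ŵβ̂_m − W*β*_m)‖₂²)` with `ζ̄² = ∑_m ‖D_m‖_F²`. -/
theorem prediction_error_decomposition_misspecified
    (d M T k : ℕ)
    (C : Matrix (Fin d) (Fin d) ℝ) (hC : C.PosDef)
    (A : Fin M → Matrix (Fin d) (Fin d) ℝ)
    (x η : Fin M → ℕ → Fin d → ℝ)
    -- dynamics for t = 0, …, T − 1
    (hdyn : ∀ m, ∀ t < T, x m (t + 1) = (A m).mulVec (x m t) + η m (t + 1))
    -- misspecified shared-basis model, in vectorized form `Ã_m = W* β*_m + D̃_m`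
    (Wstar : Matrix (Fin d × Fin d) (Fin k) ℝ) (βstar : Fin M → Fin k → ℝ)
    (D : Fin M → Matrix (Fin d) (Fin d) ℝ)
    (hshared : ∀ m j i, A m j i = Wstar.mulVec (βstar m) (j, i) + D m j i)
    -- the joint estimator minimizes the squared loss
    (Wh : Matrix (Fin d × Fin d) (Fin k) ℝ) (bh : Fin M → Fin k → ℝ)
    (hopt : ∀ (W : Matrix (Fin d × Fin d) (Fin k) ℝ) (β : Fin M → Fin k → ℝ),
      ∑ m, sqNorm ((fun p : Fin T × Fin d => x m ((p.1 : ℕ) + 1) p.2) -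
          (designMat T (x m)).mulVec (Wh.mulVec (bh m))) ≤
        ∑ m, sqNorm ((fun p : Fin T × Fin d => x m ((p.1 : ℕ) + 1) p.2) -
          (designMat T (x m)).mulVec (W.mulVec (β m))))
    -- factorization of the shared-part error `Ŵβ̂_m − W*β*_m = U r_m`
    (U : Matrix (Fin d × Fin d) (Fin (2 * k)) ℝ) (hU : Uᵀ * U = 1)
    (r : Fin M → Fin (2 * k) → ℝ)
    (hfact : ∀ m, Wh.mulVec (bh m) - Wstar.mulVec (βstar m) = U.mulVec (r m))
    -- a fixed orthonormal matrix Ū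
    (Ubar : Matrix (Fin d × Fin d) (Fin (2 * k)) ℝ) (hUbar : Ubarᵀ * Ubar = 1)
    -- covariance upper bounds and the event `E_C` : `λ̲_m I ⪯ Σ_m ⪯ λ̄_m I`
    (lamBar : Fin M → ℝ)
    (hEC : ∀ m,
      loewnerLE ((minEig C * T / 4) • (1 : Matrix (Fin d) (Fin d) ℝ)) (sampleCov T (x m)) ∧
      loewnerLE (sampleCov T (x m)) (lamBar m • (1 : Matrix (Fin d) (Fin d) ℝ))) :
    1 / 2 * ∑ m, sqNorm
        ((designMat T (x m)).mulVec (Wstar.mulVec (βstar m) - Wh.mulVec (bh m))) ≤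
      Real.sqrt (∑ m,
          Ubarᵀ.mulVec ((designMat T (x m))ᵀ.mulVec (noiseStack T (η m))) ⬝ᵥ
            (Ubarᵀ * ((designMat T (x m))ᵀ * designMat T (x m)) * Ubar +
              Ubarᵀ * ((minEig C * T / 4) •
                (1 : Matrix (Fin d × Fin d) (Fin d × Fin d) ℝ)) * Ubar)⁻¹.mulVec
              (Ubarᵀ.mulVec ((designMat T (x m))ᵀ.mulVec (noiseStack T (η m))))) *
        Real.sqrt (2 * ∑ m, sqNorm
          ((designMat T (x m)).mulVec (Wstar.mulVec (βstar m) - Wh.mulVec (bh m)))) +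
      (∑ m, noiseStack T (η m) ⬝ᵥ
        (designMat T (x m)).mulVec ((U - Ubar).mulVec (r m))) +
      Real.sqrt (∑ m,
          Ubarᵀ.mulVec ((designMat T (x m))ᵀ.mulVec (noiseStack T (η m))) ⬝ᵥ
            (Ubarᵀ * ((designMat T (x m))ᵀ * designMat T (x m)) * Ubar +
              Ubarᵀ * ((minEig C * T / 4) •
                (1 : Matrix (Fin d × Fin d) (Fin d × Fin d) ℝ)) * Ubar)⁻¹.mulVec
              (Ubarᵀ.mulVec ((designMat T (x m))ᵀ.mulVec (noiseStack T (η m))))) *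
        Real.sqrt (2 * ∑ m, sqNorm
          ((designMat T (x m)).mulVec ((Ubar - U).mulVec (r m)))) +
      2 * Real.sqrt (⨆ m : Fin M, lamBar m) * Real.sqrt (∑ m, frobSq (D m)) *
        Real.sqrt (∑ m, sqNorm
          ((designMat T (x m)).mulVec (Wh.mulVec (bh m) - Wstar.mulVec (βstar m)))) := by
  classical
  by_cases hdT : d = 0 ∨ T = 0
  · have hempty : IsEmpty (Fin T × Fin d) := by
      rcases hdT with h | h <;> subst h <;> infer_instance
    have h1 : ∀ v : Fin T × Fin d → ℝ, sqNorm v = 0 := fun v => by simp [sqNorm]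
    have h2 : ∀ a b : Fin T × Fin d → ℝ, a ⬝ᵥ b = 0 := fun a b => by simp [dotProduct]
    simp only [h1, h2, Finset.sum_const_zero, mul_zero, Real.sqrt_zero, add_zero, zero_add,
      le_refl]
  · push_neg at hdT
    obtain ⟨hd0, hT0⟩ := hdT
    have hd : 0 < d := Nat.pos_of_ne_zero hd0
    have hT : (0:ℝ) < T := by exact_mod_cast Nat.pos_of_ne_zero hT0
    have hminC := minEig_pos hd hC
    have hc : 0 < minEig C * T / 4 := by positivity
    have hlow : ∀ m (u : Fin d × Fin d → ℝ),
        (minEig C * T / 4) * sqNorm u ≤ sqNorm ((designMat T (x m)).mulVec u) :=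
      fun m u => block_lower (x m) _ (hEC m).1 u
    have hup : ∀ m, sqNorm ((designMat T (x m)).mulVec (fun q : Fin d × Fin d => D m q.1 q.2))
        ≤ lamBar m * frobSq (D m) := by
      intro m
      have h := block_upper (x m) (lamBar m) (hEC m).2 (fun q : Fin d × Fin d => D m q.1 q.2)
      have heq : sqNorm (fun q : Fin d × Fin d => D m q.1 q.2) = frobSq (D m) := by
        simp only [sqNorm, frobSq]
        rw [Fintype.sum_prod_type]
      rwa [heq] at h
    have hds : ∀ m, 0 ≤ frobSq (D m) := fun m =>
      Finset.sum_nonneg fun i _ => Finset.sum_nonneg fun j _ => sq_nonneg _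
    have hlam0 : ∀ m, 0 ≤ lamBar m := by
      intro m
      set w : Fin d → ℝ := fun i => if i = ⟨0, hd⟩ then (1:ℝ) else 0 with hw
      have hwn : sqNorm w = 1 := by
        have h : ∀ i : Fin d, w i ^ 2 = if i = ⟨0, hd⟩ then (1:ℝ) else 0 := by
          intro i; by_cases h : i = ⟨0, hd⟩ <;> simp [hw, h]
        simp only [sqNorm, h]
        simp
      have h0 : 0 ≤ w ⬝ᵥ (sampleCov T (x m)).mulVec w := by
        rw [quad_sampleCov]
        exact Finset.sum_nonneg fun t _ => sq_nonneg _
      have h1 := loewner_quad (hEC m).2 w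
      rw [dot_smul_one, hwn, mul_one] at h1
      linarith
    have hsup : ∀ m, lamBar m ≤ ⨆ m, lamBar m := fun m =>
      le_ciSup (Set.finite_range lamBar).bddAbove m
    have hsup0 : 0 ≤ ⨆ m, lamBar m := by
      rcases Nat.eq_zero_or_pos M with hM | hM
      · subst hM
        rw [Real.iSup_of_isEmpty]
      · exact le_trans (hlam0 ⟨0, hM⟩) (hsup ⟨0, hM⟩)
    have hy : ∀ m, (fun p : Fin T × Fin d => x m ((p.1 : ℕ) + 1) p.2) =
        (designMat T (x m)).mulVec (Wstar.mulVec (βstar m)) +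
        (designMat T (x m)).mulVec (fun q : Fin d × Fin d => D m q.1 q.2) +
        noiseStack T (η m) := by
      intro m
      funext p
      show x m ((p.1 : ℕ) + 1) p.2 =
        ((designMat T (x m)).mulVec (Wstar.mulVec (βstar m)) +
          (designMat T (x m)).mulVec (fun q : Fin d × Fin d => D m q.1 q.2) +
          noiseStack T (η m)) p
      have hstep := hdyn m (p.1 : ℕ) p.1.isLt
      have hxp : x m ((p.1 : ℕ) + 1) p.2 =
          (A m).mulVec (x m (p.1 : ℕ)) p.2 + η m ((p.1 : ℕ) + 1) p.2 := by
        rw [hstep]; rfl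
      rw [hxp]
      have hA : (A m).mulVec (x m (p.1 : ℕ)) p.2 =
          ∑ i, x m (p.1 : ℕ) i * Wstar.mulVec (βstar m) (p.2, i) +
          ∑ i, x m (p.1 : ℕ) i * D m p.2 i := by
        show ∑ i, A m p.2 i * x m (p.1 : ℕ) i = _
        rw [← Finset.sum_add_distrib]
        refine Finset.sum_congr rfl fun i _ => ?_
        rw [hshared m p.2 i]
        ring
      rw [hA]
      show _ = (designMat T (x m)).mulVec (Wstar.mulVec (βstar m)) p +
          (designMat T (x m)).mulVec (fun q : Fin d × Fin d => D m q.1 q.2) p +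
          noiseStack T (η m) p
      rw [designMat_mulVec_apply, designMat_mulVec_apply]
      rfl
    exact core (fun m => designMat T (x m)) (fun m => noiseStack T (η m))
      (fun m p => x m ((p.1 : ℕ) + 1) p.2)
      (fun m => Wstar.mulVec (βstar m)) (fun m => Wh.mulVec (bh m))
      (fun m q => D m q.1 q.2) (minEig C * T / 4) hc U Ubar hU hUbar r hfact hy
      (hopt Wstar βstar) hlow lamBar (fun m => frobSq (D m)) hds hup
      (⨆ m, lamBar m) hsup0 hsup

end JointLTI
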